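/- In the Jordan plane B = k⟨x,y⟩/(yx - xy - x²) over a field of characteristic 0, the relation y·x^n = x^n·y + n·x^{n+1} holds for all n ≥ 1, and consequently the idealizer of the left ideal By, namely {z ∈ B : Byz ⊆ By}, equals the subring A = k + By. -/
import Mathlib


/-- The defining relation `yx = xy + x²` of the Jordan plane, inside the free
algebra on two generators (`false` plays the role of `x` and `true` that of `y`). -/
inductive JordanPlaneRel (k : Type*) [CommRing k] :
    FreeAlgebra k Bool → FreeAlgebra k Bool → Prop
  | rel : JordanPlaneRel k
      (FreeAlgebra.ι k true * FreeAlgebra.ι k false)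
      (FreeAlgebra.ι k false * FreeAlgebra.ι k true +
        FreeAlgebra.ι k false * FreeAlgebra.ι k false)

namespace JordanAux

open Polynomial

noncomputable section

variable (k : Type*) [Field k] [CharZero k]

abbrev B := RingQuot (JordanPlaneRel k)

def xx : B k := RingQuot.mkAlgHom k (JordanPlaneRel k) (FreeAlgebra.ι k false)

def yy : B k := RingQuot.mkAlgHom k (JordanPlaneRel k) (FreeAlgebra.ι k true)

/-- Multiplication by `X` on `k[X]`. -/
def Xop : Module.End k k[X] := Algebra.lmul k k[X] Polynomial.X

/-- The operator `X² d/dX` on `k[X]`. -/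
def Yop : Module.End k k[X] :=
  (Algebra.lmul k k[X] (Polynomial.X ^ 2)) ∘ₗ (derivative : k[X] →ₗ[k] k[X])

lemma Xop_apply (p : k[X]) : Xop k p = Polynomial.X * p := rfl

lemma Yop_apply (p : k[X]) : Yop k p = Polynomial.X ^ 2 * derivative p := rfl

variable {k}

lemma yx : yy k * xx k = xx k * yy k + xx k * xx k := by
  have h := RingQuot.mkAlgHom_rel k (JordanPlaneRel.rel (k := k))
  simpa [xx, yy, map_mul, map_add] using h

lemma y_pow (n : ℕ) : yy k * xx k ^ n = xx k ^ n * yy k + n • xx k ^ (n + 1) := by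
  induction n with
  | zero => simp
  | succ n ih =>
    have h1 : yy k * xx k ^ (n + 1) = (yy k * xx k ^ n) * xx k := by
      rw [mul_assoc, ← pow_succ]
    have e1 : xx k ^ n * (xx k * xx k) = xx k ^ (n + 1 + 1) := by
      rw [← mul_assoc, ← pow_succ, ← pow_succ]
    rw [h1, ih, add_mul, smul_mul_assoc, mul_assoc, yx, mul_add, ← mul_assoc, ← pow_succ,
      e1, ← pow_succ, succ_nsmul]
    abel

lemma rel_preserved : ∀ ⦃a b : FreeAlgebra k Bool⦄, JordanPlaneRel k a b →
    (FreeAlgebra.lift k fun s => if s then Yop k else Xop k) a =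
    (FreeAlgebra.lift k fun s => if s then Yop k else Xop k) b := by
  rintro _ _ ⟨⟩
  simp only [map_mul, map_add, FreeAlgebra.lift_ι_apply, Bool.false_eq_true, if_true, if_false]
  refine LinearMap.ext fun p => ?_
  simp only [Module.End.mul_apply, LinearMap.add_apply, Xop_apply, Yop_apply,
    derivative_mul, derivative_X, one_mul]
  ring

/-- The representation of the Jordan plane on `k[X]` with `x ↦ X`, `y ↦ X² d/dX`. -/
def rho : B k →ₐ[k] Module.End k k[X] :=
  RingQuot.liftAlgHom k ⟨FreeAlgebra.lift k fun s => if s then Yop k else Xop k, rel_preserved⟩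

lemma rho_x : rho (xx k) = Xop k := by
  rw [xx, rho, RingQuot.liftAlgHom_mkAlgHom_apply]
  simp [FreeAlgebra.lift_ι_apply]

lemma rho_y : rho (yy k) = Yop k := by
  rw [yy, rho, RingQuot.liftAlgHom_mkAlgHom_apply]
  simp [FreeAlgebra.lift_ι_apply]

/-- Evaluation of the representation at `1 ∈ k[X]`. -/
def ee (z : B k) : k[X] := rho z 1

lemma ee_add (z w : B k) : ee (z + w) = ee z + ee w := by
  unfold ee; rw [map_add]; rfl

lemma ee_aeval (q : k[X]) : ee (aeval (xx k) q) = q := by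
  unfold ee
  rw [← aeval_algHom_apply (rho (k := k)) (xx k) q, rho_x,
    show Xop k = Algebra.lmul k k[X] Polynomial.X from rfl,
    aeval_algHom_apply (Algebra.lmul k k[X]) Polynomial.X q]
  simp [Algebra.coe_lmul_eq_mul, LinearMap.mul_apply']

lemma ee_mul_y (b : B k) : ee (b * yy k) = 0 := by
  unfold ee
  rw [map_mul]
  simp [Module.End.mul_apply, rho_y, Yop_apply]

lemma ee_y_mul (z : B k) : ee (yy k * z) = Polynomial.X ^ 2 * derivative (ee z) := by
  unfold ee
  rw [map_mul]
  simp [Module.End.mul_apply, rho_y, Yop_apply]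

/-- The elements of the form `q(x) + b·y`. -/
def InSpan (z : B k) : Prop := ∃ q : k[X], ∃ b : B k, z = aeval (xx k) q + b * yy k

lemma inSpan_add {z w : B k} (hz : InSpan z) (hw : InSpan w) : InSpan (z + w) := by
  obtain ⟨q, b, rfl⟩ := hz
  obtain ⟨q', b', rfl⟩ := hw
  exact ⟨q + q', b + b', by rw [map_add, add_mul]; abel⟩

lemma y_aeval (q : k[X]) : yy k * aeval (xx k) q =
    aeval (xx k) (Polynomial.X ^ 2 * derivative q) + aeval (xx k) q * yy k := by
  induction q using Polynomial.induction_on' with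
  | add p q hp hq =>
    rw [map_add, mul_add, hp, hq, derivative_add, mul_add, map_add, add_mul]
    abel
  | monomial n a =>
    rw [aeval_monomial, derivative_monomial]
    cases n with
    | zero =>
      simp [Algebra.commutes]
    | succ m =>
      have hmm : Polynomial.X ^ 2 * monomial (m + 1 - 1) (a * (m + 1 : ℕ)) =
          monomial (m + 2) (a * (m + 1 : ℕ)) := by
        rw [Nat.add_sub_cancel, X_pow_mul, monomial_mul_X_pow]
      rw [hmm, aeval_monomial]
      have h3 : yy k * ((algebraMap k (B k)) a * xx k ^ (m + 1)) =
          algebraMap k (B k) a * (yy k * xx k ^ (m + 1)) := by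
        rw [← mul_assoc, ← Algebra.commutes a (yy k), mul_assoc]
      rw [h3, y_pow, map_mul, map_natCast, nsmul_eq_mul,
        show (m + 1 + 1) = m + 2 from rfl]
      noncomm_ring

lemma span_all (z : B k) : InSpan z := by
  obtain ⟨w, rfl⟩ := RingQuot.mkAlgHom_surjective k (JordanPlaneRel k) z
  have key : ∀ w : FreeAlgebra k Bool, ∀ s : B k, InSpan s →
      InSpan (RingQuot.mkAlgHom k (JordanPlaneRel k) w * s) := by
    intro w
    induction w using FreeAlgebra.induction with
    | grade0 r =>
      rintro s ⟨q, b, rfl⟩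
      refine ⟨Polynomial.C r * q, algebraMap k (B k) r * b, ?_⟩
      rw [AlgHom.commutes, map_mul, aeval_C]
      simp only [mul_add, mul_assoc]
    | grade1 s =>
      cases s with
      | false =>
        rintro s ⟨q, b, rfl⟩
        exact ⟨Polynomial.X * q, xx k * b, by
          rw [map_mul, aeval_X]
          show xx k * _ = _
          simp only [mul_add, mul_assoc]⟩
      | true =>
        rintro s ⟨q, b, rfl⟩
        refine ⟨Polynomial.X ^ 2 * derivative q, aeval (xx k) q + yy k * b, ?_⟩
        show yy k * _ = _
        rw [mul_add, y_aeval, add_mul, mul_assoc]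
        abel
    | mul a b ha hb =>
      intro s hs
      rw [map_mul, mul_assoc]
      exact ha _ (hb _ hs)
    | add a b ha hb =>
      intro s hs
      rw [map_add, add_mul]
      exact inSpan_add (ha s hs) (hb s hs)
  have one : InSpan (1 : B k) := ⟨1, 0, by simp⟩
  simpa using key w 1 one

end

end JordanAux

/-- In the Jordan plane `B = k⟨x,y⟩/(yx - xy - x²)` over a field of characteristic
`0`, the relation `y·xⁿ = xⁿ·y + n·x^{n+1}` holds for all `n ≥ 1`, and consequently
the idealizer `{z ∈ B : Byz ⊆ By}` of the left ideal `By` equals the subring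
`A = k + By`. -/
theorem stmt_18 {k : Type*} [Field k] [CharZero k] :
    let B := RingQuot (JordanPlaneRel k)
    let x : B := RingQuot.mkAlgHom k (JordanPlaneRel k) (FreeAlgebra.ι k false)
    let y : B := RingQuot.mkAlgHom k (JordanPlaneRel k) (FreeAlgebra.ι k true)
    (∀ n : ℕ, 1 ≤ n → y * x ^ n = x ^ n * y + n • x ^ (n + 1)) ∧
    {z : B | ∀ b : B, ∃ b' : B, (b * y) * z = b' * y} =
      {z : B | ∃ (c : k) (b : B), z = algebraMap k B c + b * y} := by
  intro B x y
  open JordanAux Polynomial in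
  constructor
  · intro n _
    exact y_pow n
  · ext z
    simp only [Set.mem_setOf_eq]
    constructor
    · intro h
      obtain ⟨q, b₀, rfl⟩ := span_all z
      obtain ⟨b', hb'⟩ := h 1
      rw [one_mul] at hb'
      have h0 : ee (yy k * (aeval (xx k) q + b₀ * yy k)) = (0 : k[X]) := by
        rw [show yy k * (aeval (xx k) q + b₀ * yy k) = b' * yy k from hb']
        exact ee_mul_y b'
      rw [ee_y_mul, ee_add, ee_aeval, ee_mul_y, add_zero] at h0
      have hq : derivative q = 0 := by
        rcases mul_eq_zero.mp h0 with h | h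
        · exact absurd h (pow_ne_zero 2 Polynomial.X_ne_zero)
        · exact h
      refine ⟨q.coeff 0, b₀, ?_⟩
      have hC : q = Polynomial.C (q.coeff 0) := eq_C_of_derivative_eq_zero hq
      conv_lhs => rw [hC]
      rw [aeval_C]
      rfl
    · rintro ⟨c, b₀, rfl⟩ b
      refine ⟨b * algebraMap k B c + b * y * b₀, ?_⟩
      rw [mul_add, add_mul]
      congr 1
      · rw [mul_assoc, ← Algebra.commutes c y, ← mul_assoc]
      · rw [← mul_assoc]
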